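/- Let F be a field, p a monic irreducible polynomial of degree s over F, and let G_1 ∈ M_{sa}(F) and G_2 ∈ M_{sb}(F) be the generalized Jordan blocks of sizes a and b associated with p, with a ≥ b. If T is an sa × sb matrix over F satisfying G_1 T = T G_2, then the first s(a-b) rows of T are zero and the bottom sb × sb submatrix T_1 of T (formed by the last sb rows) commutes with G_2, i.e. T = [0; T_1] with T_1 ∈ Z(G_2). -/

import Mathlib

open Matrix Polynomial

/-- The companion matrix of a monic polynomial `p` of degree `s`:
ones on the first subdiagonal, `-(coefficients of p)` in the last column. -/
def companionMat (F : Type*) [Field F] (s : ℕ) (p : Polynomial F) :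
    Matrix (Fin s) (Fin s) F :=
  Matrix.of fun i j =>
    if (j : ℕ) = s - 1 then -p.coeff (i : ℕ)
    else if (i : ℕ) = (j : ℕ) + 1 then 1 else 0

/-- The matrix `E` whose `(1,s)` entry is `1` and all other entries are `0`. -/
def Emat (F : Type*) [Field F] (s : ℕ) : Matrix (Fin s) (Fin s) F :=
  Matrix.of fun i j => if (i : ℕ) = 0 ∧ (j : ℕ) = s - 1 then 1 else 0

/-- The generalized Jordan block of size `ℓ` associated with `p` (degree `s`):
the `sℓ × sℓ` block matrix with `ℓ` diagonal `s×s` blocks equal to the companion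
matrix `C` of `p`, blocks `E` directly below the diagonal, zeros elsewhere.
Rows/columns are indexed by `Fin ℓ × Fin s` (block index, index within block). -/
def genJordanBlock (F : Type*) [Field F] (s ℓ : ℕ) (p : Polynomial F) :
    Matrix (Fin ℓ × Fin s) (Fin ℓ × Fin s) F :=
  Matrix.of fun x y =>
    if x.1 = y.1 then companionMat F s p x.2 y.2
    else if (x.1 : ℕ) = (y.1 : ℕ) + 1 then Emat F s x.2 y.2 else 0

section Aux

variable {F : Type*} [Field F] {s ℓ : ℕ} (p : Polynomial F)

lemma sum_mulVec {ι n m : Type*} [Fintype n] (f : ι → Matrix m n F) (t : Finset ι)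
    (v : n → F) : (∑ i ∈ t, f i) *ᵥ v = ∑ i ∈ t, f i *ᵥ v := by
  classical
  induction t using Finset.cons_induction with
  | empty => simp [Matrix.zero_mulVec]
  | cons a t ha ih => rw [Finset.sum_cons, Finset.sum_cons, Matrix.add_mulVec, ih]

lemma col1 (k : Fin ℓ) (j : Fin s) (h : (j : ℕ) + 1 < s) :
    genJordanBlock F s ℓ p *ᵥ Pi.single (k, j) 1 =
      Pi.single (k, (⟨(j : ℕ) + 1, h⟩ : Fin s)) 1 := by
  funext x
  rw [Matrix.mulVec_single]
  show genJordanBlock F s ℓ p x (k, j) * 1 = _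
  rw [mul_one]
  rcases x with ⟨xk, xi⟩
  simp only [genJordanBlock, companionMat, Emat, Matrix.of_apply, Pi.single_apply,
    Prod.mk.injEq, Prod.ext_iff, Fin.ext_iff, and_true, true_and]
  split_ifs <;> first | rfl | (exfalso; omega)

lemma sumSingle (k : Fin ℓ) (x : Fin ℓ × Fin s) :
    (∑ i : Fin s, p.coeff (i : ℕ) • (Pi.single (k, i) 1 : Fin ℓ × Fin s → F)) x
      = if x.1 = k then p.coeff (x.2 : ℕ) else 0 := by
  rw [Finset.sum_apply]
  simp only [Pi.smul_apply, Pi.single_apply, smul_eq_mul, mul_ite, mul_one, mul_zero,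
    Prod.ext_iff]
  by_cases h : x.1 = k
  · simp only [h, true_and, if_pos]
    rw [Finset.sum_ite_eq]
    simp
  · simp only [h, false_and, if_false, Finset.sum_const_zero, if_neg h]

lemma col2 (hs : 0 < s) (k : Fin ℓ) :
    genJordanBlock F s ℓ p *ᵥ Pi.single (k, (⟨s - 1, by omega⟩ : Fin s)) 1 =
      (if h : (k : ℕ) + 1 < ℓ then
          Pi.single ((⟨(k : ℕ) + 1, h⟩ : Fin ℓ), (⟨0, hs⟩ : Fin s)) 1 else 0)
        - ∑ i : Fin s, p.coeff (i : ℕ) • (Pi.single (k, i) 1 : Fin ℓ × Fin s → F) := by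
  funext x
  rw [Matrix.mulVec_single]
  show genJordanBlock F s ℓ p x (k, ⟨s - 1, by omega⟩) * 1 = _
  rw [mul_one, Pi.sub_apply, sumSingle]
  rcases x with ⟨xk, xi⟩
  by_cases hk : (k : ℕ) + 1 < ℓ
  · rw [dif_pos hk]
    simp only [genJordanBlock, companionMat, Emat, Matrix.of_apply, Pi.single_apply,
      Prod.mk.injEq, Prod.ext_iff, Fin.ext_iff, and_true, true_and]
    split_ifs <;> first | ring1 | (exfalso; omega)
  · rw [dif_neg hk]
    simp only [genJordanBlock, companionMat, Emat, Matrix.of_apply, Pi.zero_apply,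
      Prod.mk.injEq, Prod.ext_iff, Fin.ext_iff, and_true, true_and]
    split_ifs <;> first | ring1 | (exfalso; omega)

lemma colPow (hs : 0 < s) (k : Fin ℓ) :
    ∀ m, ∀ (h : m < s), (genJordanBlock F s ℓ p) ^ m *ᵥ Pi.single (k, (⟨0, hs⟩ : Fin s)) 1 =
      Pi.single (k, (⟨m, h⟩ : Fin s)) 1 := by
  intro m
  induction m with
  | zero => intro h; rw [pow_zero, Matrix.one_mulVec]
  | succ m ih =>
      intro h
      rw [pow_succ', ← Matrix.mulVec_mulVec, ih (by omega), col1 p k ⟨m, by omega⟩ h]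

variable (hs : 0 < s) (hmonic : p.Monic) (hdeg : p.natDegree = s)

include hs hmonic hdeg in
lemma colAeval0 (k : Fin ℓ) :
    (aeval (genJordanBlock F s ℓ p) p) *ᵥ Pi.single (k, (⟨0, hs⟩ : Fin s)) 1 =
      if h : (k : ℕ) + 1 < ℓ then
        Pi.single ((⟨(k : ℕ) + 1, h⟩ : Fin ℓ), (⟨0, hs⟩ : Fin s)) 1 else 0 := by
  set G := genJordanBlock F s ℓ p with hG
  have hc : p.coeff s = 1 := by rw [← hdeg]; exact hmonic.coeff_natDegree
  rw [aeval_eq_sum_range, hdeg, _root_.sum_mulVec, Finset.sum_range_succ]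
  have hGs : G ^ s *ᵥ Pi.single (k, (⟨0, hs⟩ : Fin s)) 1 =
      (if h : (k : ℕ) + 1 < ℓ then
          Pi.single ((⟨(k : ℕ) + 1, h⟩ : Fin ℓ), (⟨0, hs⟩ : Fin s)) 1 else 0)
        - ∑ i : Fin s, p.coeff (i : ℕ) • (Pi.single (k, i) 1 : Fin ℓ × Fin s → F) := by
    have hsplit : G ^ s = G * G ^ (s - 1) := by
      rw [← pow_succ', Nat.sub_add_cancel hs]
    rw [hsplit, ← Matrix.mulVec_mulVec, colPow p hs k (s - 1) (by omega), col2 p hs k]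
  have hA : ∑ i ∈ Finset.range s, (p.coeff i • G ^ i) *ᵥ Pi.single (k, (⟨0, hs⟩ : Fin s)) 1
      = ∑ i : Fin s, p.coeff (i : ℕ) • (Pi.single (k, i) 1 : Fin ℓ × Fin s → F) := by
    rw [← Fin.sum_univ_eq_sum_range
      (fun i => (p.coeff i • G ^ i) *ᵥ Pi.single (k, (⟨0, hs⟩ : Fin s)) 1) s]
    refine Finset.sum_congr rfl fun i _ => ?_
    rw [Matrix.smul_mulVec, colPow p hs k (i : ℕ) i.isLt, Fin.eta]
  rw [hA, Matrix.smul_mulVec, hGs, hc, one_smul]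
  abel

include hs hmonic hdeg in
lemma colAeval (k : Fin ℓ) (j : Fin s) :
    (aeval (genJordanBlock F s ℓ p) p) *ᵥ Pi.single (k, j) 1 =
      if h : (k : ℕ) + 1 < ℓ then
        Pi.single ((⟨(k : ℕ) + 1, h⟩ : Fin ℓ), j) 1 else 0 := by
  set G := genJordanBlock F s ℓ p with hG
  have h0 : Pi.single (k, j) (1 : F) = G ^ (j : ℕ) *ᵥ Pi.single (k, (⟨0, hs⟩ : Fin s)) 1 := by
    rw [colPow p hs k (j : ℕ) j.isLt, Fin.eta]
  have hcomm : aeval G p * G ^ (j : ℕ) = G ^ (j : ℕ) * aeval G p := by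
    rw [← Polynomial.aeval_X_pow (R := F) (x := G) (n := (j : ℕ)), ← _root_.map_mul, ← _root_.map_mul, mul_comm p]
  rw [h0, Matrix.mulVec_mulVec, hcomm, ← Matrix.mulVec_mulVec, colAeval0 p hs hmonic hdeg k]
  by_cases h : (k : ℕ) + 1 < ℓ
  · rw [dif_pos h, dif_pos h, colPow p hs ⟨(k : ℕ) + 1, h⟩ (j : ℕ) j.isLt, Fin.eta]
  · rw [dif_neg h, dif_neg h, Matrix.mulVec_zero]

include hs hmonic hdeg in
lemma colAevalPow (m : ℕ) (k : Fin ℓ) (j : Fin s) :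
    (aeval (genJordanBlock F s ℓ p) p) ^ m *ᵥ Pi.single (k, j) 1 =
      if h : (k : ℕ) + m < ℓ then
        Pi.single ((⟨(k : ℕ) + m, h⟩ : Fin ℓ), j) 1 else 0 := by
  induction m with
  | zero =>
      rw [pow_zero, Matrix.one_mulVec, dif_pos (show (k : ℕ) + 0 < ℓ by omega)]
      rfl
  | succ m ih =>
      rw [pow_succ', ← Matrix.mulVec_mulVec, ih]
      by_cases h : (k : ℕ) + m < ℓ
      · rw [dif_pos h, colAeval p hs hmonic hdeg ⟨(k : ℕ) + m, h⟩ j]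
        by_cases h2 : (k : ℕ) + m + 1 < ℓ
        · rw [dif_pos h2, dif_pos (show (k : ℕ) + (m + 1) < ℓ by omega)]
          rfl
        · rw [dif_neg h2, dif_neg (show ¬((k : ℕ) + (m + 1) < ℓ) by omega)]
      · rw [dif_neg h, Matrix.mulVec_zero, dif_neg (show ¬((k : ℕ) + (m + 1) < ℓ) by omega)]

include hs hmonic hdeg in
lemma entryAevalPow (m : ℕ) (x y : Fin ℓ × Fin s) :
    ((aeval (genJordanBlock F s ℓ p) p) ^ m) x y =
      if ((y.1 : ℕ) + m < ℓ ∧ (x.1 : ℕ) = (y.1 : ℕ) + m ∧ x.2 = y.2) then 1 else 0 := by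
  obtain ⟨yk, yj⟩ := y
  dsimp only
  have h := colAevalPow p hs hmonic hdeg m yk yj
  rw [Matrix.mulVec_single] at h
  have h2 := congrFun h x
  simp only [MulOpposite.op_one, one_smul, Matrix.col_apply] at h2
  rw [h2]
  by_cases hc : (yk : ℕ) + m < ℓ
  · rw [dif_pos hc]
    simp only [Pi.single_apply, Prod.ext_iff, Fin.ext_iff]
    split_ifs <;> first | rfl | (exfalso; omega)
  · rw [dif_neg hc]
    rw [if_neg (by omega)]
    rfl

end Aux

/-- if `G_1, G_2` are generalized Jordan blocks of sizes `a ≥ b`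
associated with a monic irreducible `p` of degree `s` and `G_1 T = T G_2`, then
`T = [0; T_1]` with `T_1 ∈ Z(G_2)`: the first `s(a-b)` rows of `T` vanish and the
bottom `sb × sb` submatrix commutes with `G_2`. -/
theorem intertwiner_genJordanBlocks_ge
    {F : Type*} [Field F] {s a b : ℕ} (hab : b ≤ a)
    (p : Polynomial F) (hmonic : p.Monic) (hirr : Irreducible p)
    (hdeg : p.natDegree = s)
    (T : Matrix (Fin a × Fin s) (Fin b × Fin s) F)
    (hT : genJordanBlock F s a p * T = T * genJordanBlock F s b p) :
    (∀ (x : Fin a × Fin s) (y : Fin b × Fin s), (x.1 : ℕ) < a - b → T x y = 0) ∧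
    (Matrix.of fun x y : Fin b × Fin s =>
        T (⟨a - b + (x.1 : ℕ), by have := x.1.isLt; omega⟩, x.2) y) *
        genJordanBlock F s b p =
      genJordanBlock F s b p *
        (Matrix.of fun x y : Fin b × Fin s =>
          T (⟨a - b + (x.1 : ℕ), by have := x.1.isLt; omega⟩, x.2) y) := by

  rcases Nat.eq_zero_or_pos s with hs0 | hs
  · subst hs0
    constructor
    · intro x y _; exact x.2.elim0
    · apply Matrix.ext; intro i j; exact i.2.elim0
  set G₁ := genJordanBlock F s a p with hG₁
  set G₂ := genJordanBlock F s b p with hG₂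
  have hpow : ∀ m, G₁ ^ m * T = T * G₂ ^ m := by
    intro m
    induction m with
    | zero => rw [pow_zero, pow_zero, Matrix.one_mul, Matrix.mul_one]
    | succ n ih =>
        rw [pow_succ', pow_succ', Matrix.mul_assoc, ih, ← Matrix.mul_assoc, hT,
          Matrix.mul_assoc]
  have hM : aeval G₁ p * T = T * aeval G₂ p := by
    rw [aeval_eq_sum_range, aeval_eq_sum_range, Matrix.sum_mul, Matrix.mul_sum]
    refine Finset.sum_congr rfl fun i _ => ?_
    rw [Matrix.smul_mul, Matrix.mul_smul, hpow i]
  have hMpow : ∀ m, (aeval G₁ p) ^ m * T = T * (aeval G₂ p) ^ m := by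
    intro m
    induction m with
    | zero => rw [pow_zero, pow_zero, Matrix.one_mul, Matrix.mul_one]
    | succ n ih =>
        rw [pow_succ', pow_succ', Matrix.mul_assoc, ih, ← Matrix.mul_assoc, hM,
          Matrix.mul_assoc]
  have hM2 : (aeval G₂ p) ^ b = 0 := by
    apply Matrix.ext; intro x y
    rw [hG₂, entryAevalPow p hs hmonic hdeg b x y, if_neg (by omega), Matrix.zero_apply]
  have hzero : ∀ (x : Fin a × Fin s) (y : Fin b × Fin s), (x.1 : ℕ) < a - b → T x y = 0 := by
    intro x y hx
    have h0 : (aeval G₁ p) ^ b * T = 0 := by rw [hMpow b, hM2, Matrix.mul_zero]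
    have hx' : (x.1 : ℕ) + b < a := by omega
    have h1 : ((aeval G₁ p) ^ b * T) ((⟨(x.1 : ℕ) + b, hx'⟩ : Fin a), x.2) y = 0 := by
      rw [h0, Matrix.zero_apply]
    rw [Matrix.mul_apply, Finset.sum_eq_single x] at h1
    · rw [hG₁, entryAevalPow p hs hmonic hdeg b _ x, if_pos ⟨hx', rfl, rfl⟩, one_mul] at h1
      exact h1
    · intro z _ hz
      rw [hG₁, entryAevalPow p hs hmonic hdeg b _ z]
      rw [if_neg, zero_mul]
      rintro ⟨hlt, h2, h3⟩
      exact hz (Prod.ext_iff.mpr ⟨Fin.ext (by simp only [] at h2; omega), h3.symm⟩)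
    · intro hxmem; exact absurd (Finset.mem_univ x) hxmem
  refine ⟨hzero, ?_⟩
  apply Matrix.ext; intro x y
  have hxlt : a - b + (x.1 : ℕ) < a := by have := x.1.isLt; omega
  set x' : Fin a × Fin s := (⟨a - b + (x.1 : ℕ), hxlt⟩, x.2) with hx'
  have hL : ((Matrix.of fun x y : Fin b × Fin s =>
      T (⟨a - b + (x.1 : ℕ), by have := x.1.isLt; omega⟩, x.2) y) * G₂) x y
      = (T * G₂) x' y := by
    rw [Matrix.mul_apply, Matrix.mul_apply]
    rfl
  rw [hL, ← hT, Matrix.mul_apply, Matrix.mul_apply]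
  have hinj : Function.Injective
      (fun w : Fin b × Fin s =>
        ((⟨a - b + (w.1 : ℕ), by have := w.1.isLt; omega⟩ : Fin a), w.2)) := by
    intro u v huv
    rw [Prod.ext_iff] at huv
    obtain ⟨h1, h2⟩ := huv
    rw [Fin.ext_iff] at h1
    refine Prod.ext_iff.mpr ⟨Fin.ext ?_, h2⟩
    simp only [] at h1
    omega
  have step1 : (∑ z, G₁ x' z * T z y) =
      ∑ z ∈ Finset.univ.map (⟨_, hinj⟩ : (Fin b × Fin s) ↪ (Fin a × Fin s)),
        G₁ x' z * T z y := by
    refine (Finset.sum_subset (Finset.subset_univ _) ?_).symm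
    intro z _ hz
    have hzlt : (z.1 : ℕ) < a - b := by
      by_contra hge
      push_neg at hge
      refine hz (Finset.mem_map.mpr
        ⟨(⟨(z.1 : ℕ) - (a - b), by have := z.1.isLt; omega⟩, z.2), Finset.mem_univ _, ?_⟩)
      simp only [Function.Embedding.coeFn_mk]
      refine Prod.ext_iff.mpr ⟨Fin.ext ?_, rfl⟩
      simp only []
      omega
    rw [hzero z y hzlt, mul_zero]
  rw [step1, Finset.sum_map]
  refine Finset.sum_congr rfl fun w _ => ?_
  simp only [Function.Embedding.coeFn_mk, Matrix.of_apply]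
  have key : G₁ x' ((⟨a - b + (w.1 : ℕ), by have := w.1.isLt; omega⟩ : Fin a), w.2)
      = G₂ x w := by
    show genJordanBlock F s a p _ _ = genJordanBlock F s b p _ _
    rw [hx']
    rcases x with ⟨xk, xi⟩
    rcases w with ⟨wk, wi⟩
    simp only [genJordanBlock, companionMat, Emat, Matrix.of_apply, Fin.ext_iff,
      and_true, true_and]
    split_ifs <;> first | rfl | (exfalso; omega)
  rw [key]
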